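/- Let p be a prime. There exist elements c_i (for integers i ≥ 1) of the free associative unital ring ℤ⟨s₀,s₁⟩ on two noncommuting generators, with each c_i homogeneous of degree p^i (a ℤ-linear combination of words of length p^i in s₀ and s₁), such that for every associative unital ring A, all elements a₀, a₁ ∈ A, and every integer n ≥ 1, the element (a₀+a₁)^{p^n} − a₀^{p^n} − a₁^{p^n} − Σ_{i=1}^{n} p^i · c_i(a₀,a₁)^{p^{n−i}} lies in the additive subgroup [A,A] of A generated by all commutators ab − ba (here c_i(a₀,a₁) denotes the image of c_i under the ring homomorphism ℤ⟨s₀,s₁⟩ → A sending s₀ ↦ a₀, s₁ ↦ a₁). -/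

import Mathlib

namespace CILE
open List Finset

abbrev Word := List (Fin 2)

/-- concatenation power -/
def wpow (u : Word) : ℕ → Word
  | 0 => []
  | m+1 => u ++ wpow u m

@[simp] lemma wpow_zero (u : Word) : wpow u 0 = [] := rfl
@[simp] lemma wpow_succ (u : Word) (m : ℕ) : wpow u (m+1) = u ++ wpow u m := rfl

lemma wpow_length (u : Word) (m : ℕ) : (wpow u m).length = m * u.length := by
  induction m with
  | zero => simp
  | succ m ih => simp [ih, Nat.succ_mul, Nat.add_comm]

lemma wpow_replicate (a : Fin 2) (K m : ℕ) :
    wpow (replicate K a) m = replicate (m * K) a := by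
  induction m with
  | zero => simp
  | succ m ih => rw [wpow_succ, ih, Nat.succ_mul, Nat.add_comm, ← List.replicate_add]

lemma take_wpow (u : Word) (m : ℕ) : (wpow u (m+1)).take u.length = u := by
  rw [wpow_succ, List.take_left]

lemma wpow_alt (a b : Word) (m : ℕ) :
    wpow (a ++ b) m ++ a = a ++ wpow (b ++ a) m := by
  induction m with
  | zero => simp
  | succ m ih =>
    rw [wpow_succ, wpow_succ]
    rw [List.append_assoc, ih]
    simp [List.append_assoc]

lemma rotate_wpow_of_le (u : Word) (m r : ℕ) (hr : r ≤ u.length) :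
    (wpow u m).rotate r = wpow (u.rotate r) m := by
  cases m with
  | zero => simp
  | succ m =>
    have hu : u = u.take r ++ u.drop r := (take_append_drop r u).symm
    have hlt : r ≤ (wpow u (m+1)).length := by
      rw [wpow_length]
      exact le_trans hr (Nat.le_mul_of_pos_left _ (Nat.succ_pos m))
    rw [List.rotate_eq_drop_append_take hlt, List.rotate_eq_drop_append_take hr]
    -- wpow u (m+1) = u.take r ++ (u.drop r ++ wpow u m)
    have h1 : wpow u (m+1) = u.take r ++ (u.drop r ++ wpow u m) := by
      rw [wpow_succ]; rw [← List.append_assoc]; rw [← hu]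
    have hlen : (u.take r).length = r := by
      rw [List.length_take]; exact Nat.min_eq_left hr
    have htake : (wpow u (m+1)).take r = u.take r := by
      rw [h1]
      have h2 := List.take_left (l₁ := u.take r) (l₂ := u.drop r ++ wpow u m)
      rwa [hlen] at h2
    have hdrop : (wpow u (m+1)).drop r = u.drop r ++ wpow u m := by
      rw [h1]
      have h2 := List.drop_left (l₁ := u.take r) (l₂ := u.drop r ++ wpow u m)
      rwa [hlen] at h2
    rw [htake, hdrop]
    -- goal:  u.drop r ++ wpow u m ++ u.take r = wpow (u.drop r ++ u.take r) (m+1)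
    rw [wpow_succ]
    calc u.drop r ++ wpow u m ++ u.take r
        = u.drop r ++ (wpow (u.take r ++ u.drop r) m ++ u.take r) := by
          rw [← hu]; simp [List.append_assoc]
      _ = u.drop r ++ (u.take r ++ wpow (u.drop r ++ u.take r) m) := by
          rw [wpow_alt]
      _ = u.drop r ++ u.take r ++ wpow (u.drop r ++ u.take r) m := by
          simp [List.append_assoc]

lemma rotate_wpow_mul (u : Word) (m q : ℕ) :
    (wpow u m).rotate (q * u.length) = wpow u m := by
  induction q with
  | zero => simp
  | succ q ih =>
    have : (q+1) * u.length = q * u.length + u.length := by ring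
    rw [this, ← List.rotate_rotate, ih, rotate_wpow_of_le u m u.length le_rfl,
      List.rotate_length]

lemma rotate_wpow (u : Word) (m r : ℕ) (hu : 0 < u.length) :
    (wpow u m).rotate r = wpow (u.rotate (r % u.length)) m := by
  conv_lhs => rw [← Nat.div_add_mod r u.length]
  rw [← List.rotate_rotate, Nat.mul_comm, rotate_wpow_mul,
    rotate_wpow_of_le _ _ _ (le_of_lt (Nat.mod_lt r hu))]

/-- key: commuting append forces power structure -/
lemma eq_wpow_of_comm (u : Word) : ∀ (m : ℕ) (v : Word), v.length = m * u.length →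
    v ++ u = u ++ v → v = wpow u m := by
  intro m
  induction m with
  | zero => intro v hv _; simpa using List.length_eq_zero_iff.mp (by simpa using hv)
  | succ m ih =>
    intro v hv hc
    have hle : u.length ≤ v.length := by
      rw [hv, Nat.succ_mul]; exact Nat.le_add_left _ _
    have htv : v.take u.length = u := by
      have h1 : (v ++ u).take u.length = v.take u.length :=
        List.take_append_of_le_length hle
      have h2 : (u ++ v).take u.length = u := List.take_left (l₁ := u) (l₂ := v)
      rw [← h1, hc, h2]
    set v' := v.drop u.length with hv'
    have hvsplit : v = u ++ v' := by rw [← htv]; exact (List.take_append_drop _ v).symm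
    have hlen' : v'.length = m * u.length := by
      rw [hv', List.length_drop, hv, Nat.succ_mul]; omega
    have hc' : v' ++ u = u ++ v' := by
      have : (u ++ v') ++ u = u ++ (u ++ v') := by rw [← hvsplit]; exact hc
      rw [List.append_assoc] at this
      exact List.append_cancel_left this
    rw [hvsplit, ih v' hlen' hc', wpow_succ]

lemma eq_wpow_of_rotate (W : Word) (K m : ℕ) (hK : 0 < K) (hlen : W.length = K * m)
    (hrot : W.rotate K = W) : W = wpow (W.take K) m := by
  rcases Nat.eq_zero_or_pos m with hm | hm
  · subst hm; simp at hlen; simp [hlen]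
  have hKle : K ≤ W.length := by rw [hlen]; exact Nat.le_mul_of_pos_right _ hm
  have hsplit : W.drop K ++ W.take K = W := by
    rw [← List.rotate_eq_drop_append_take hKle]; exact hrot
  have hcomm : W.drop K ++ W.take K = W.take K ++ W.drop K := by
    rw [hsplit]; exact (List.take_append_drop K W).symm
  have htl : (W.take K).length = K := by rw [List.length_take]; exact Nat.min_eq_left hKle
  have hdl : (W.drop K).length = (m-1) * K := by
    rw [List.length_drop, hlen]; cases m with
    | zero => omega
    | succ m => simp [Nat.succ_mul]; ring_nf; omega
  have := eq_wpow_of_comm (W.take K) (m-1) (W.drop K) (by rw [hdl, htl]) hcomm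
  calc W = W.take K ++ W.drop K := (List.take_append_drop K W).symm
    _ = W.take K ++ wpow (W.take K) (m-1) := by rw [this]
    _ = wpow (W.take K) m := by
        cases m with
        | zero => omega
        | succ m => simp

/-! ### blocks -/

/-- the `t`-th block of length `L` -/
def blk (L t : ℕ) (X : Word) : Word := (X.drop (t*L)).take L

lemma blk_append_left {L t : ℕ} {X Y : Word} (h : (t+1)*L ≤ X.length) :
    blk L t (X ++ Y) = blk L t X := by
  have e1 : (t+1)*L = t*L + L := by ring
  have h1 : t*L ≤ X.length := by omega
  unfold blk
  rw [List.drop_append_of_le_length h1, List.take_append_of_le_length]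
  rw [List.length_drop]
  omega

lemma blk_append_right {L t m : ℕ} {X Y : Word} (h : X.length = m*L) :
    blk L (m+t) (X ++ Y) = blk L t Y := by
  unfold blk
  have : (m+t)*L = X.length + t*L := by rw [h]; ring
  rw [this, ← List.drop_drop, List.drop_left]

lemma blk_wpow {L m : ℕ} {X : Word} (hX : X.length = m*L) :
    ∀ c t, t < c*m → blk L t (wpow X c) = blk L (t % m) X := by
  intro c
  induction c with
  | zero => intro t ht; rw [Nat.zero_mul] at ht; omega
  | succ c ih =>
    intro t ht
    have e1 : (c+1)*m = c*m + m := by ring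
    have hm : 0 < m := by rcases Nat.eq_zero_or_pos m with h|h
                          · subst h; omega
                          · exact h
    rcases Nat.lt_or_ge t m with h | h
    · rw [wpow_succ, blk_append_left (by rw [hX]; exact Nat.mul_le_mul_right _ h),
        Nat.mod_eq_of_lt h]
    · obtain ⟨t', rfl⟩ : ∃ t', t = m + t' := ⟨t - m, by omega⟩
      rw [wpow_succ, blk_append_right hX, ih t' (by omega), Nat.add_mod_left]

lemma blk_rotate_step {L q s : ℕ} {Y : Word} (hrot : Y.rotate (q*L) = Y)
    (hb : (s+q+1)*L ≤ Y.length) : blk L (s+q) Y = blk L s Y := by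
  have hql : q*L ≤ Y.length := le_trans (by nlinarith) hb
  have hYsplit : Y = Y.drop (q*L) ++ Y.take (q*L) := by
    conv_lhs => rw [← hrot]
    exact List.rotate_eq_drop_append_take hql
  have h2 : blk L s (Y.drop (q*L) ++ Y.take (q*L)) = blk L s (Y.drop (q*L)) := by
    apply blk_append_left
    rw [List.length_drop]
    have e1 : (s+q+1)*L = s*L + q*L + L := by ring
    have e2 : (s+1)*L = s*L + L := by ring
    omega
  have h3 : blk L s (Y.drop (q*L)) = blk L (s+q) Y := by
    unfold blk
    rw [List.drop_drop]
    congr 2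
    ring
  calc blk L (s+q) Y = blk L s (Y.drop (q*L)) := h3.symm
    _ = blk L s (Y.drop (q*L) ++ Y.take (q*L)) := h2.symm
    _ = blk L s Y := by rw [← hYsplit]

lemma blk_mod {L m' q : ℕ} {Y : Word} (hm : Y.length = m'*L)
    (hq : 0 < q) (hrot : Y.rotate (q*L) = Y) :
    ∀ a, a < m' → blk L a Y = blk L (a % q) Y := by
  intro a
  induction a using Nat.strong_induction_on with
  | _ a ih =>
    intro ha
    rcases Nat.lt_or_ge a q with h | h
    · rw [Nat.mod_eq_of_lt h]
    · obtain ⟨b, rfl⟩ : ∃ b, a = b + q := ⟨a - q, by omega⟩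
      have h1 : blk L (b+q) Y = blk L b Y :=
        blk_rotate_step hrot (by rw [hm]; exact Nat.mul_le_mul_right _ (by omega))
      rw [h1, ih b (by omega) (by omega), Nat.add_mod_right]

lemma blk_rotate_cyc {L m' : ℕ} {Z : Word} (hZ : Z.length = m' * L) (hL : 0 < L) :
    ∀ t, t < m' → blk L t (Z.rotate L) = blk L ((t+1) % m') Z := by
  intro t ht
  have hm' : 0 < m' := by omega
  have hLle : L ≤ Z.length := by rw [hZ]; exact Nat.le_mul_of_pos_left _ hm'
  have hsplit : Z.rotate L = Z.drop L ++ Z.take L := List.rotate_eq_drop_append_take hLle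
  rcases Nat.lt_or_ge (t+1) m' with h | h
  · have e1 : (t+1)*L = t*L + L := by ring
    have e3 : (t+2)*L ≤ m'*L := Nat.mul_le_mul_right L (by omega)
    have e4 : (t+2)*L = t*L + L + L := by ring
    rw [Nat.mod_eq_of_lt h, hsplit, blk_append_left (by rw [List.length_drop, hZ]; omega)]
    unfold blk
    rw [List.drop_drop]
    congr 2
    ring
  · have ht1 : t + 1 = m' := by omega
    have hmod : (t+1) % m' = 0 := by rw [ht1, Nat.mod_self]
    rw [hmod, hsplit]
    unfold blk
    have hdl : (Z.drop L).length = t * L := by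
      rw [List.length_drop, hZ]
      have e1 : m' * L = t*L + L := by rw [← ht1]; ring
      omega
    rw [← hdl, List.drop_left, Nat.zero_mul, List.drop_zero, List.take_take, min_self]

/-! ### cyclic product reindexing and periodic grouping -/

lemma prod_cyc {M : Type*} [CommMonoid M] (G : ℕ → M) (m' : ℕ) :
    ∏ t ∈ range m', G ((t+1) % m') = ∏ t ∈ range m', G t := by
  cases m' with
  | zero => simp
  | succ k =>
    rw [Finset.prod_range_succ, Finset.prod_range_succ']
    congr 1
    · apply Finset.prod_congr rfl
      intro t ht
      rw [Nat.mod_eq_of_lt (by simpa using Finset.mem_range.mp ht)]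
    · rw [Nat.mod_self]

lemma prod_range_mul_periodic {M : Type*} [CommMonoid M] (f : ℕ → M) (q e : ℕ)
    (hf : ∀ t, f (t+q) = f t) :
    ∏ t ∈ range (q*e), f t = (∏ t ∈ range q, f t)^e := by
  have haux : ∀ s x, f (x + q*s) = f x := by
    intro s
    induction s with
    | zero => simp
    | succ s ih => intro x; rw [Nat.mul_succ, ← Nat.add_assoc, hf, ih]
  induction e with
  | zero => simp
  | succ e ih =>
    rw [Nat.mul_succ, Finset.prod_range_add, ih, pow_succ]
    congr 1
    apply Finset.prod_congr rfl
    intro x _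
    rw [Nat.add_comm, haux]

lemma sum_range_mul_periodic (f : ℕ → ℤ) (q e : ℕ)
    (hf : ∀ t, f (t+q) = f t) :
    ∑ t ∈ range (q*e), f t = e * ∑ t ∈ range q, f t := by
  have haux : ∀ s x, f (x + q*s) = f x := by
    intro s
    induction s with
    | zero => simp
    | succ s ih => intro x; rw [Nat.mul_succ, ← Nat.add_assoc, hf, ih]
  induction e with
  | zero => simp
  | succ e ih =>
    rw [Nat.mul_succ, Finset.sum_range_add, ih]
    push_cast
    have : ∑ x ∈ range q, f (q*e + x) = ∑ x ∈ range q, f x := by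
      apply Finset.sum_congr rfl
      intro x _
      rw [Nat.add_comm, haux]
    rw [this]
    ring

lemma int_fermat_pow {p : ℕ} (hp : p.Prime) (a : ℤ) (e : ℕ) :
    (p:ℤ)^(e+1) ∣ a^(p^(e+1)) - a^(p^e) := by
  haveI : Fact p.Prime := ⟨hp⟩
  have h1 : (p:ℤ) ∣ a^p - a := by
    have : ((a^p - a : ℤ) : ZMod p) = 0 := by
      push_cast
      rw [ZMod.pow_card]
      ring
    exact_mod_cast (ZMod.intCast_zmod_eq_zero_iff_dvd _ _).mp this
  have h2 := dvd_sub_pow_of_dvd_sub h1 e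
  have h3 : (a^p)^(p^e) = a^(p^(e+1)) := by
    rw [← pow_mul, pow_succ]
    ring_nf
  rwa [h3] at h2
/-! ### rotation classes -/

def RZ (W : Word) : Finset Word := (Finset.range (W.length+1)).image (W.rotate ·)

lemma mem_RZ_image {V W : Word} : V ∈ RZ W ↔ ∃ k ∈ Finset.range (W.length+1), W.rotate k = V := by
  unfold RZ
  exact Finset.mem_image

lemma self_mem_RZ (W : Word) : W ∈ RZ W :=
  mem_RZ_image.mpr ⟨0, Finset.mem_range.mpr (Nat.succ_pos _), W.rotate_zero⟩

lemma rotate_mul_length (W : Word) : ∀ q, W.rotate (W.length * q) = W := by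
  intro q
  induction q with
  | zero => simp
  | succ q ih => rw [Nat.mul_succ, ← List.rotate_rotate, ih, List.rotate_length]

lemma mem_RZ_iff {V W : Word} : V ∈ RZ W ↔ ∃ k, V = W.rotate k := by
  constructor
  · intro h
    obtain ⟨k, _, hk⟩ := mem_RZ_image.mp h
    exact ⟨k, hk.symm⟩
  · rintro ⟨k, rfl⟩
    rcases Nat.eq_zero_or_pos W.length with h0 | h0
    · have hW : W = [] := List.length_eq_zero_iff.mp h0
      subst hW
      rw [List.rotate_nil]
      exact self_mem_RZ []
    · apply mem_RZ_image.mpr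
      refine ⟨k % W.length, Finset.mem_range.mpr ?_, List.rotate_mod W k⟩
      have := Nat.mod_lt k h0
      omega

lemma length_of_mem_RZ {V W : Word} (h : V ∈ RZ W) : V.length = W.length := by
  obtain ⟨k, rfl⟩ := mem_RZ_iff.mp h
  exact List.length_rotate W k

lemma rotate_mem_RZ (W : Word) (k : ℕ) : W.rotate k ∈ RZ W := mem_RZ_iff.mpr ⟨k, rfl⟩

lemma RZ_rotate (W : Word) (k : ℕ) : RZ (W.rotate k) = RZ W := by
  ext X
  rw [mem_RZ_iff, mem_RZ_iff]
  constructor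
  · rintro ⟨s, rfl⟩
    exact ⟨k + s, by rw [List.rotate_rotate]⟩
  · rintro ⟨s, rfl⟩
    rcases Nat.eq_zero_or_pos W.length with h0 | h0
    · have : W = [] := List.length_eq_zero_iff.mp h0
      subst this
      exact ⟨s, by simp [List.rotate_nil]⟩
    · refine ⟨(W.length - k % W.length) + s, ?_⟩
      rw [List.rotate_rotate]
      have h1 : k + (W.length - k % W.length + s) = (k + (W.length - k % W.length)) + s := by ring
      rw [h1]
      have h2 : k + (W.length - k % W.length) = W.length * (k / W.length + 1) := by
        have h3 := Nat.div_add_mod k W.length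
        have h4 := Nat.mod_lt k h0
        rw [Nat.mul_add, Nat.mul_one]
        omega
      rw [← List.rotate_rotate, h2, rotate_mul_length]

lemma RZ_of_mem {V W : Word} (h : V ∈ RZ W) : RZ V = RZ W := by
  obtain ⟨k, rfl⟩ := mem_RZ_iff.mp h
  exact RZ_rotate W k

lemma RZ_nonempty (W : Word) : (RZ W).Nonempty := ⟨W, self_mem_RZ W⟩

lemma replicate_mem_RZ_iff {W : Word} {a : Fin 2} :
    replicate W.length a ∈ RZ W ↔ W = replicate W.length a := by
  constructor
  · intro h
    obtain ⟨k, hk⟩ := mem_RZ_iff.mp h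
    rcases Nat.eq_zero_or_pos W.length with h0 | h0
    · rw [h0]; simpa using List.length_eq_zero_iff.mp h0
    · have h1 : W.rotate k = replicate W.length a := hk.symm
      have h2 : W = (W.rotate k).rotate (W.length * (k+1) - k) := by
        rw [List.rotate_rotate]
        have h3 : k + (W.length * (k+1) - k) = W.length * (k+1) := by
          have : k ≤ W.length * (k+1) := by nlinarith
          omega
        rw [h3, rotate_mul_length]
      conv_lhs => rw [h2, h1, List.rotate_replicate]
  · intro h
    rw [← h]
    exact self_mem_RZ W

/-! ### minimal period -/

lemma minPer_exists {W : Word} (h : 0 < W.length) : ∃ r, 0 < r ∧ W.rotate r = W :=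
  ⟨W.length, h, List.rotate_length W⟩

def minPer (W : Word) : ℕ :=
  if h : 0 < W.length then Nat.find (minPer_exists h) else 1

section minPerFacts
variable {W : Word} (hW : 0 < W.length)
include hW

lemma minPer_pos : 0 < minPer W := by
  rw [minPer, dif_pos hW]
  exact (Nat.find_spec (minPer_exists hW)).1

lemma rotate_minPer : W.rotate (minPer W) = W := by
  rw [minPer, dif_pos hW]
  exact (Nat.find_spec (minPer_exists hW)).2

lemma minPer_min {r : ℕ} (hr : 0 < r) (hlt : r < minPer W) : W.rotate r ≠ W := by
  rw [minPer, dif_pos hW] at hlt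
  intro hc
  exact Nat.find_min (minPer_exists hW) hlt ⟨hr, hc⟩

lemma minPer_le : minPer W ≤ W.length := by
  rw [minPer, dif_pos hW]
  exact Nat.find_min' (minPer_exists hW) ⟨hW, List.rotate_length W⟩

lemma rotate_minPer_mul (q : ℕ) : W.rotate (minPer W * q) = W := by
  induction q with
  | zero => simp
  | succ q ih => rw [Nat.mul_succ, ← List.rotate_rotate, ih, rotate_minPer hW]

lemma minPer_dvd {r : ℕ} (hr : W.rotate r = W) : minPer W ∣ r := by
  set d := minPer W with hd
  have h1 : W.rotate (r % d) = W := by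
    have h2 := Nat.div_add_mod r d
    have h3 : W.rotate (d * (r/d) + r % d) = W := by rw [h2]; exact hr
    rw [← List.rotate_rotate, rotate_minPer_mul hW] at h3
    exact h3
  by_contra hc
  have h4 : r % d ≠ 0 := fun h => hc (Nat.dvd_of_mod_eq_zero h)
  have h5 : r % d < d := Nat.mod_lt r (minPer_pos hW)
  exact minPer_min hW (Nat.pos_of_ne_zero h4) h5 h1

lemma minPer_dvd_length : minPer W ∣ W.length := minPer_dvd hW (List.rotate_length W)

lemma rotate_eq_rotate_mod_minPer (r : ℕ) : W.rotate r = W.rotate (r % minPer W) := by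
  set d := minPer W
  conv_lhs => rw [← Nat.div_add_mod r d]
  rw [← List.rotate_rotate, rotate_minPer_mul hW]

lemma rotate_inj_aux {x y : ℕ} (hxy : x ≤ y) (hy : y < minPer W)
    (hxyrot : W.rotate x = W.rotate y) : x = y := by
  have hxle : x ≤ W.length := le_trans (le_of_lt (lt_of_le_of_lt hxy hy)) (minPer_le hW)
  have h1 : W = W.rotate (y - x) := by
    have h2 : W.rotate (x + (W.length - x)) = W := by
      have : x + (W.length - x) = W.length := by omega
      rw [this, List.rotate_length]
    calc W = (W.rotate x).rotate (W.length - x) := by rw [List.rotate_rotate, h2]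
      _ = (W.rotate y).rotate (W.length - x) := by rw [hxyrot]
      _ = W.rotate ((y - x) + W.length) := by
          rw [List.rotate_rotate]
          congr 1
          omega
      _ = (W.rotate (y-x)).rotate (W.rotate (y-x)).length := by
          rw [List.rotate_rotate, List.length_rotate]
      _ = W.rotate (y - x) := List.rotate_length _
  by_contra hc
  have h3 : 0 < y - x := by omega
  exact minPer_min hW h3 (by omega) h1.symm

lemma rotate_injOn_minPer {a b : ℕ} (ha : a < minPer W) (hb : b < minPer W)
    (hab : W.rotate a = W.rotate b) : a = b := by
  rcases Nat.le_total a b with h | h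
  · exact rotate_inj_aux hW h hb hab
  · exact (rotate_inj_aux hW h ha hab.symm).symm

lemma RZ_eq_image_minPer : RZ W = (Finset.range (minPer W)).image (W.rotate ·) := by
  apply Finset.Subset.antisymm
  · intro V hV
    obtain ⟨k, rfl⟩ := mem_RZ_iff.mp hV
    apply Finset.mem_image.mpr
    refine ⟨k % minPer W, Finset.mem_range.mpr (Nat.mod_lt k (minPer_pos hW)), ?_⟩
    exact (rotate_eq_rotate_mod_minPer hW k).symm
  · intro V hV
    obtain ⟨k, _, hk⟩ := Finset.mem_image.mp hV
    exact mem_RZ_iff.mpr ⟨k, hk.symm⟩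

lemma card_RZ : (RZ W).card = minPer W := by
  have hinj : Set.InjOn (W.rotate ·) (Finset.range (minPer W)) := by
    intro a ha b hb hab
    exact rotate_injOn_minPer hW (Finset.mem_range.mp ha) (Finset.mem_range.mp hb) hab
  rw [RZ_eq_image_minPer hW, Finset.card_image_of_injOn hinj, Finset.card_range]

end minPerFacts

/-! ### RZ of powers -/

lemma RZ_wpow {V : Word} (hV : 0 < V.length) (c : ℕ) :
    RZ (wpow V c) = (RZ V).image (fun Y => wpow Y c) := by
  ext X
  rw [mem_RZ_iff]
  constructor
  · rintro ⟨k, rfl⟩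
    rw [rotate_wpow V c k hV]
    exact Finset.mem_image.mpr ⟨V.rotate (k % V.length), rotate_mem_RZ V _, rfl⟩
  · intro h
    obtain ⟨Y, hY, rfl⟩ := Finset.mem_image.mp h
    obtain ⟨k, rfl⟩ := mem_RZ_iff.mp hY
    refine ⟨k, ?_⟩
    rw [rotate_wpow V c k hV, List.rotate_mod]

lemma wpow_injOn {c : ℕ} (hc : 0 < c) {Y Y' : Word} (hlen : Y.length = Y'.length)
    (h : wpow Y c = wpow Y' c) : Y = Y' := by
  obtain ⟨c', rfl⟩ : ∃ c', c = c' + 1 := ⟨c - 1, by omega⟩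
  have h1 := take_wpow Y c'
  have h2 := take_wpow Y' c'
  rw [← h1, ← h2, ← hlen, h]

/-! ### minimal representative -/

noncomputable def minrep (W : Word) : Word := (RZ W).min' (RZ_nonempty W)

lemma minrep_mem (W : Word) : minrep W ∈ RZ W := Finset.min'_mem _ _

lemma minrep_of_mem {V W : Word} (h : V ∈ RZ W) : minrep V = minrep W := by
  have h1 : RZ V = RZ W := RZ_of_mem h
  apply _root_.le_antisymm
  · exact Finset.min'_le _ _ (by rw [h1]; exact minrep_mem W)
  · exact Finset.min'_le _ _ (by rw [← h1]; exact minrep_mem V)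

lemma minrep_length (W : Word) : (minrep W).length = W.length :=
  length_of_mem_RZ (minrep_mem W)
/-! ### the coefficient recursion -/

section IntLayer
variable (p : ℕ)

/-- block product -/
def gfun (β : Word → ℤ) (L m : ℕ) (V : Word) : ℤ := ∏ t ∈ Finset.range m, β (blk L t V)

/-- necklace-sum of block products -/
def Phi (β : Word → ℤ) (L m : ℕ) (W : Word) : ℤ := ∑ V ∈ RZ W, gfun β L m V

/-- indicator of pure words -/
def pureInd (W : Word) : ℤ :=
  (if replicate W.length (0 : Fin 2) ∈ RZ W then 1 else 0)
  + (if replicate W.length (1 : Fin 2) ∈ RZ W then 1 else 0)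

def NumF (bb : ℕ → Word → ℤ) (n : ℕ) (W : Word) : ℤ :=
  ((RZ W).card : ℤ) - pureInd W
    - ∑ i ∈ Finset.Icc 1 (n-1), (p:ℤ)^i * Phi (bb i) (p^i) (p^(n-i)) W

noncomputable def bstep (n : ℕ) (prev : ℕ → Word → ℤ) : Word → ℤ :=
  fun w => if 1 ≤ n ∧ w.length = p^n ∧ w = minrep w then NumF p prev n w / (p:ℤ)^n else 0

noncomputable def bvec : ℕ → ℕ → Word → ℤ
  | 0 => fun _ _ => 0
  | n+1 => fun i => if i = n then bstep p n (bvec n) else bvec n i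

/-- the coefficient family -/
noncomputable def bc (n : ℕ) : Word → ℤ := bvec p (n+1) n

lemma bvec_coh : ∀ m i, i < m → bvec p m i = bc p i := by
  intro m
  induction m with
  | zero => intro i hi; omega
  | succ m ih =>
    intro i hi
    rcases Nat.lt_or_ge i m with h | h
    · have h1 : bvec p (m+1) i = bvec p m i := by
        show (if i = m then _ else _) = _
        rw [if_neg (by omega)]
      rw [h1, ih i h]
    · have h2 : i = m := by omega
      subst h2
      rfl

lemma bc_def (n : ℕ) (w : Word) :
    bc p n w = if 1 ≤ n ∧ w.length = p^n ∧ w = minrep w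
      then NumF p (bc p) n w / (p:ℤ)^n else 0 := by
  have h0 : bc p n w = bstep p n (bvec p n) w := by
    show bvec p (n+1) n w = _
    show (if n = n then bstep p n (bvec p n) else bvec p n n) w = _
    rw [if_pos rfl]
  rw [h0]
  unfold bstep
  by_cases h : 1 ≤ n ∧ w.length = p^n ∧ w = minrep w
  · rw [if_pos h, if_pos h]
    have hN : NumF p (bvec p n) n w = NumF p (bc p) n w := by
      unfold NumF
      congr 1
      apply Finset.sum_congr rfl
      intro i hi
      obtain ⟨hi1, hi2⟩ := Finset.mem_Icc.mp hi
      rw [bvec_coh p n i (by omega)]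
    rw [hN]
  · rw [if_neg h, if_neg h]

noncomputable def Num (n : ℕ) (W : Word) : ℤ := NumF p (bc p) n W

lemma Phi_of_mem {β : Word → ℤ} {L m : ℕ} {V W : Word} (h : V ∈ RZ W) :
    Phi β L m V = Phi β L m W := by
  unfold Phi
  rw [RZ_of_mem h]

lemma pureInd_of_mem {V W : Word} (h : V ∈ RZ W) : pureInd V = pureInd W := by
  unfold pureInd
  rw [length_of_mem_RZ h, RZ_of_mem h]

lemma Num_of_mem {n : ℕ} {V W : Word} (h : V ∈ RZ W) : Num p n V = Num p n W := by
  unfold Num NumF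
  rw [RZ_of_mem h, pureInd_of_mem h]
  congr 1
  apply Finset.sum_congr rfl
  intro i _
  rw [Phi_of_mem h]

/-- gfun is invariant under rotating by one block -/
lemma gfun_rotate_blk {β : Word → ℤ} {L m : ℕ} {Z : Word} (hZ : Z.length = m * L)
    (hL : 0 < L) : gfun β L m (Z.rotate L) = gfun β L m Z := by
  unfold gfun
  have h1 : ∀ t ∈ Finset.range m, β (blk L t (Z.rotate L)) =
      (fun t => β (blk L t Z)) ((t+1) % m) := by
    intro t ht
    rw [blk_rotate_cyc hZ hL t (Finset.mem_range.mp ht)]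
  rw [Finset.prod_congr rfl h1, prod_cyc (fun t => β (blk L t Z)) m]

/-- gfun of a `p`-fold concatenation power is the `p`-th power of gfun -/
lemma gfun_wpow {β : Word → ℤ} {L mm c : ℕ} {Y : Word} (hY : Y.length = mm * L)
    (hmm : 0 < mm) :
    gfun β L (mm * c) (wpow Y c) = (gfun β L mm Y)^c := by
  unfold gfun
  have h1 : ∀ t ∈ Finset.range (mm * c), β (blk L t (wpow Y c)) =
      (fun t => β (blk L (t % mm) Y)) t := by
    intro t ht
    rw [blk_wpow hY c t (by
      have h2 := Finset.mem_range.mp ht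
      have e : mm*c = c*mm := Nat.mul_comm _ _
      omega)]
  rw [Finset.prod_congr rfl h1]
  rw [prod_range_mul_periodic (fun t => β (blk L (t % mm) Y)) mm c
    (fun t => by simp only [Nat.add_mod_right])]
  congr 1
  apply Finset.prod_congr rfl
  intro t ht
  simp only [Nat.mod_eq_of_lt (Finset.mem_range.mp ht)]

end IntLayer
/-! ### the key congruence and divisibility -/

section Main
variable {p : ℕ}

lemma EQ_of_DIV (hp : p.Prime) {n : ℕ} (hn : 1 ≤ n)
    (hdiv : ∀ W : Word, W.length = p^n → (p:ℤ)^n ∣ Num p n W) :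
    ∀ W : Word, W.length = p^n →
      ((RZ W).card : ℤ) = pureInd W
        + ∑ i ∈ Finset.Icc 1 n, (p:ℤ)^i * Phi (bc p i) (p^i) (p^(n-i)) W := by
  intro W hW
  obtain ⟨m, rfl⟩ : ∃ m, n = m + 1 := ⟨n-1, by omega⟩
  rw [Finset.sum_Icc_succ_top (by omega)]
  have hlast : Phi (bc p (m+1)) (p^(m+1)) (p^((m+1)-(m+1))) W
      = Num p (m+1) W / (p:ℤ)^(m+1) := by
    have he : (m+1)-(m+1) = 0 := by omega
    rw [he]
    unfold Phi
    have hterm : ∀ V ∈ RZ W, gfun (bc p (m+1)) (p^(m+1)) (p^0) V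
        = if V = minrep W then Num p (m+1) W / (p:ℤ)^(m+1) else 0 := by
      intro V hV
      have hVlen : V.length = p^(m+1) := by rw [length_of_mem_RZ hV, hW]
      have hg : gfun (bc p (m+1)) (p^(m+1)) (p^0) V = bc p (m+1) V := by
        unfold gfun
        rw [pow_zero, Finset.prod_range_one]
        unfold blk
        rw [Nat.zero_mul, List.drop_zero, ← hVlen, List.take_length]
      rw [hg, bc_def]
      by_cases hc : V = minrep W
      · rw [if_pos hc]
        have hguard : 1 ≤ m+1 ∧ V.length = p^(m+1) ∧ V = minrep V := by
          refine ⟨by omega, hVlen, ?_⟩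
          rw [minrep_of_mem hV]
          exact hc
        rw [if_pos hguard]
        have hNum : NumF p (bc p) (m+1) V = Num p (m+1) W := Num_of_mem p hV
        rw [hNum]
      · rw [if_neg hc, if_neg]
        intro hguard
        exact hc (by rw [← minrep_of_mem hV]; exact hguard.2.2)
    rw [Finset.sum_congr rfl hterm, Finset.sum_ite_eq' (RZ W) (minrep W)
      (fun _ => Num p (m+1) W / (p:ℤ)^(m+1)), if_pos (minrep_mem W)]
  rw [hlast, Int.mul_ediv_cancel' (hdiv W hW)]
  unfold Num NumF
  rw [Nat.add_sub_cancel]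
  ring

lemma key_dvd (hp : p.Prime) (β : Word → ℤ) {V : Word} {i m : ℕ}
    (hV : V.length = p^m) (hi : 1 ≤ i) (him : i ≤ m) :
    (p:ℤ)^(m+1-i) ∣
      ∑ Y ∈ RZ V, (gfun β (p^i) (p^(m-i)) Y - (gfun β (p^i) (p^(m-i)) Y)^p) := by
  have hppos := hp.pos
  set L := p^i with hL
  set mm := p^(m-i) with hmm
  have hLpos : 0 < L := pow_pos hppos i
  have hmmpos : 0 < mm := pow_pos hppos (m-i)
  have hVpos : 0 < V.length := by rw [hV]; exact pow_pos hppos m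
  obtain ⟨j, hjm, hdj⟩ := (Nat.dvd_prime_pow hp).mp (hV ▸ minPer_dvd_length hVpos)
  have hrotY : ∀ Y ∈ RZ V, Y.rotate (p^j) = Y := by
    intro Y hY
    obtain ⟨r, rfl⟩ := mem_RZ_iff.mp hY
    have h1 : V.rotate (p^j) = V := by
      rw [← hdj]
      exact rotate_minPer hVpos
    rw [List.rotate_rotate, Nat.add_comm, ← List.rotate_rotate, h1]
  have hYlen : ∀ Y ∈ RZ V, Y.length = mm * L := by
    intro Y hY
    rw [length_of_mem_RZ hY, hV, hmm, hL, ← pow_add]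
    congr 1
    omega
  rcases Nat.le_total j i with hji | hij
  · -- all blocks of each Y are equal
    apply Finset.dvd_sum
    intro Y hY
    have hrotL : Y.rotate (1 * L) = Y := by
      rw [Nat.one_mul]
      have h2 : L = p^j * (p^(i-j)) := by rw [hL, ← pow_add]; congr 1; omega
      have h3 : ∀ q, Y.rotate (p^j * q) = Y := by
        intro q
        induction q with
        | zero => simp
        | succ q ih => rw [Nat.mul_succ, ← List.rotate_rotate, ih, hrotY Y hY]
      rw [h2]
      exact h3 _
    have hblk : ∀ a, a < mm → blk L a Y = blk L 0 Y := by
      intro a ha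
      have h4 := blk_mod (hYlen Y hY) Nat.one_pos hrotL a ha
      rw [Nat.mod_one] at h4
      exact h4
    have hg : gfun β L mm Y = (β (blk L 0 Y))^(p^(m-i)) := by
      unfold gfun
      rw [Finset.prod_congr rfl (fun t ht => congrArg β (hblk t (Finset.mem_range.mp ht)))]
      rw [Finset.prod_const, Finset.card_range, hmm]
    set a := β (blk L 0 Y)
    have hpow : (a^(p^(m-i)))^p = a^(p^(m-i+1)) := by
      rw [← pow_mul, pow_succ]
    have hf := int_fermat_pow hp a (m-i)
    have he : m + 1 - i = m - i + 1 := by omega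
    rw [hg, hpow, he]
    exact (dvd_sub_comm).mp hf
  · -- i < j : group rotations and use periodicity of blocks
    set q := p^(j-i) with hq
    have hqpos : 0 < q := pow_pos hppos _
    have hqL : q * L = p^j := by rw [hq, hL, ← pow_add]; congr 1; omega
    have hqdvd : q ∣ mm := by
      rw [hq, hmm]
      exact pow_dvd_pow p (by omega)
    -- structure of gfun on each Y
    have hgstruct : ∀ Y ∈ RZ V,
        gfun β L mm Y = (∏ t ∈ Finset.range q, β (blk L t Y))^(p^(m-j)) := by
      intro Y hY
      have hrotq : Y.rotate (q*L) = Y := by rw [hqL]; exact hrotY Y hY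
      have hblk := blk_mod (hYlen Y hY) hqpos hrotq
      unfold gfun
      have h1 : ∀ t ∈ Finset.range mm, β (blk L t Y)
          = (fun t => β (blk L (t % q) Y)) t := by
        intro t ht
        rw [hblk t (Finset.mem_range.mp ht)]
      rw [Finset.prod_congr rfl h1]
      have e2 : mm = q * p^(m-j) := by rw [hq, hmm, ← pow_add]; congr 1; omega
      rw [e2, prod_range_mul_periodic (fun t => β (blk L (t % q) Y)) q (p^(m-j))
        (fun t => by simp only [Nat.add_mod_right])]
      congr 1
      apply Finset.prod_congr rfl
      intro t ht
      simp only [Nat.mod_eq_of_lt (Finset.mem_range.mp ht)]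
    -- termwise divisibility by p^(m-j+1)
    have hterm : ∀ Y ∈ RZ V,
        (p:ℤ)^(m-j+1) ∣ (gfun β L mm Y - (gfun β L mm Y)^p) := by
      intro Y hY
      rw [hgstruct Y hY]
      set a := ∏ t ∈ Finset.range q, β (blk L t Y)
      have hpow : (a^(p^(m-j)))^p = a^(p^(m-j+1)) := by
        rw [← pow_mul, pow_succ]
      rw [hpow]
      exact (dvd_sub_comm).mp (int_fermat_pow hp a (m-j))
    -- group the sum by rotation steps of size L
    have hsum : ∑ Y ∈ RZ V, (gfun β L mm Y - (gfun β L mm Y)^p)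
        = ∑ r ∈ Finset.range (minPer V),
            (gfun β L mm (V.rotate r) - (gfun β L mm (V.rotate r))^p) := by
      rw [RZ_eq_image_minPer hVpos]
      rw [Finset.sum_image]
      intro x hx y hy hxy
      exact rotate_injOn_minPer hVpos (Finset.mem_range.mp hx) (Finset.mem_range.mp hy) hxy
    have hper : ∀ r, (gfun β L mm (V.rotate (r + L)) - (gfun β L mm (V.rotate (r + L)))^p)
        = (gfun β L mm (V.rotate r) - (gfun β L mm (V.rotate r))^p) := by
      intro r
      have h1 : V.rotate (r + L) = (V.rotate r).rotate L := (List.rotate_rotate V r L).symm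
      have h2 : (V.rotate r).length = mm * L := hYlen _ (rotate_mem_RZ V r)
      rw [h1, gfun_rotate_blk h2 hLpos]
    have hdmin : minPer V = L * q := by
      rw [hdj, ← hqL]
      ring
    rw [hsum, hdmin, sum_range_mul_periodic _ L q hper]
    have hinner : (p:ℤ)^(m-j+1) ∣
        ∑ r ∈ Finset.range L, (gfun β L mm (V.rotate r) - (gfun β L mm (V.rotate r))^p) := by
      apply Finset.dvd_sum
      intro r _
      exact hterm _ (rotate_mem_RZ V r)
    obtain ⟨Z, hZ⟩ := hinner
    rw [hZ]
    have : ((q:ℤ)) * ((p:ℤ)^(m-j+1) * Z) = (p:ℤ)^(m+1-i) * Z := by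
      rw [hq]
      push_cast
      rw [← mul_assoc, ← pow_add]
      congr 2
      omega
    rw [this]
    exact Dvd.intro Z rfl

end Main
section DIVsec
variable {p : ℕ}

lemma pureInd_singleton (a : Fin 2) : pureInd [a] = 1 := by
  have h0 : (List.replicate [a].length (0:Fin 2) ∈ RZ [a]) ↔ (a = 0) := by
    rw [replicate_mem_RZ_iff]
    simp [List.replicate, eq_comm]
  have h1 : (List.replicate [a].length (1:Fin 2) ∈ RZ [a]) ↔ (a = 1) := by
    rw [replicate_mem_RZ_iff]
    simp [List.replicate, eq_comm]
  unfold pureInd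
  fin_cases a
  · rw [if_pos (h0.mpr rfl), if_neg (by rw [h1]; decide)]
    norm_num
  · rw [if_neg (by rw [h0]; decide), if_pos (h1.mpr rfl)]
    norm_num

lemma card_RZ_singleton (a : Fin 2) : (RZ [a]).card = 1 := by
  have h := card_RZ (W := [a]) (by simp)
  have h2 : minPer [a] ∣ 1 := minPer_dvd (by simp) (List.rotate_singleton a 1)
  rw [h, Nat.dvd_one.mp h2]

theorem DIV (hp : p.Prime) :
    ∀ n, 1 ≤ n → ∀ W : Word, W.length = p^n → (p:ℤ)^n ∣ Num p n W := by
  intro n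
  induction n using Nat.strong_induction_on with
  | _ n IH =>
    intro hn W hW
    have hppos := hp.pos
    have hWpos : 0 < W.length := by rw [hW]; exact pow_pos hppos n
    by_cases hrot : W.rotate (p^(n-1)) = W
    · -- case A : W = V^p
      set K := p^(n-1) with hK
      have hKpos : 0 < K := pow_pos hppos _
      have hWlen : W.length = K * p := by rw [hW, hK, ← pow_succ]; congr 1; omega
      have hKle : K ≤ W.length := by rw [hWlen]; exact Nat.le_mul_of_pos_right _ hppos
      have hWpow : W = wpow (W.take K) p := eq_wpow_of_rotate W K p hKpos hWlen hrot
      set V := W.take K with hV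
      have hVlen : V.length = K := by
        rw [hV, List.length_take]
        exact Nat.min_eq_left hKle
      have hVpos : 0 < V.length := by rw [hVlen]; exact hKpos
      have hinj : ∀ x ∈ RZ V, ∀ y ∈ RZ V, wpow x p = wpow y p → x = y := by
        intro x hx y hy hxy
        exact wpow_injOn hppos (by rw [length_of_mem_RZ hx, length_of_mem_RZ hy]) hxy
      have hRZW : RZ W = (RZ V).image (fun Y => wpow Y p) := by
        conv_lhs => rw [hWpow]
        exact RZ_wpow hVpos p
      have hcard : ((RZ W).card : ℤ) = ((RZ V).card : ℤ) := by
        rw [hRZW, Finset.card_image_of_injOn hinj]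
      have hiffeq : ∀ a : Fin 2,
          (W = List.replicate W.length a) ↔ (V = List.replicate V.length a) := by
        intro a
        constructor
        · intro h
          rw [hVlen]
          calc V = W.take K := hV
            _ = (List.replicate W.length a).take K := by rw [← h]
            _ = List.replicate (min K W.length) a := List.take_replicate (a := a) (i := K) (n := W.length)
            _ = List.replicate K a := by rw [Nat.min_eq_left hKle]
        · intro h
          have h' : V = List.replicate K a := by rw [← hVlen]; exact h
          calc W = wpow V p := hWpow
            _ = wpow (List.replicate K a) p := by rw [← h']
            _ = List.replicate (p*K) a := wpow_replicate a K p
            _ = List.replicate W.length a := by rw [hWlen, Nat.mul_comm]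
      have hmem : ∀ a : Fin 2,
          (List.replicate W.length a ∈ RZ W) ↔ (List.replicate V.length a ∈ RZ V) :=
        fun a => replicate_mem_RZ_iff.trans ((hiffeq a).trans replicate_mem_RZ_iff.symm)
      have hpure : pureInd W = pureInd V := by
        unfold pureInd
        rw [if_congr (hmem 0) rfl rfl, if_congr (hmem 1) rfl rfl]
      by_cases hn1 : n = 1
      · -- base : n = 1
        subst hn1
        have hK1 : K = 1 := by rw [hK]; norm_num
        obtain ⟨a, ha⟩ := List.length_eq_one_iff.mp (by rw [hVlen, hK1] : V.length = 1)
        have hNum : Num p 1 W = ((RZ W).card : ℤ) - pureInd W := by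
          unfold Num NumF
          rw [show (1:ℕ)-1 = 0 from rfl, Finset.Icc_eq_empty (by omega), Finset.sum_empty]
          ring
        rw [hNum, hcard, hpure, ha, pureInd_singleton, card_RZ_singleton]
        simp
      · -- inductive step : n ≥ 2
        set m := n - 1 with hm
        have hm1 : 1 ≤ m := by omega
        have hmn : m < n := by omega
        have hVlenm : V.length = p^m := by rw [hVlen, hK]
        have EQm := EQ_of_DIV hp hm1 (IH m hmn hm1) V hVlenm
        have hPhiW : ∀ i, 1 ≤ i → i ≤ m →
            Phi (bc p i) (p^i) (p^(n-i)) W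
              = ∑ Y ∈ RZ V, (gfun (bc p i) (p^i) (p^(m-i)) Y)^p := by
          intro i hi1 him
          unfold Phi
          rw [hRZW, Finset.sum_image hinj]
          apply Finset.sum_congr rfl
          intro Y hY
          have hYlen : Y.length = p^(m-i) * p^i := by
            rw [length_of_mem_RZ hY, hVlenm, ← pow_add]
            congr 1
            omega
          have he : p^(n-i) = p^(m-i) * p := by
            rw [← pow_succ]
            congr 1
            omega
          rw [he]
          exact gfun_wpow hYlen (pow_pos hppos _)
        have hNum : Num p n W = ∑ i ∈ Finset.Icc 1 m,
            (p:ℤ)^i * (∑ Y ∈ RZ V,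
              (gfun (bc p i) (p^i) (p^(m-i)) Y - (gfun (bc p i) (p^i) (p^(m-i)) Y)^p)) := by
          unfold Num NumF
          rw [← hm, hcard, hpure, EQm]
          have hsc : ∀ i ∈ Finset.Icc 1 m,
              (p:ℤ)^i * Phi (bc p i) (p^i) (p^(n-i)) W
                = (p:ℤ)^i * ∑ Y ∈ RZ V, (gfun (bc p i) (p^i) (p^(m-i)) Y)^p := by
            intro i hi
            obtain ⟨h1, h2⟩ := Finset.mem_Icc.mp hi
            rw [hPhiW i h1 h2]
          rw [Finset.sum_congr rfl hsc]
          have key : (∑ i ∈ Finset.Icc 1 m, (p:ℤ)^i * Phi (bc p i) (p^i) (p^(m-i)) V)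
              - (∑ i ∈ Finset.Icc 1 m,
                  (p:ℤ)^i * ∑ Y ∈ RZ V, (gfun (bc p i) (p^i) (p^(m-i)) Y)^p)
              = ∑ i ∈ Finset.Icc 1 m, (p:ℤ)^i * (∑ Y ∈ RZ V,
                  (gfun (bc p i) (p^i) (p^(m-i)) Y - (gfun (bc p i) (p^i) (p^(m-i)) Y)^p)) := by
            rw [← Finset.sum_sub_distrib]
            apply Finset.sum_congr rfl
            intro i _
            rw [← mul_sub]
            congr 1
            unfold Phi
            rw [← Finset.sum_sub_distrib]
          have hre : pureInd V + (∑ i ∈ Finset.Icc 1 m, (p:ℤ)^i * Phi (bc p i) (p^i) (p^(m-i)) V)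
              - pureInd V
              - (∑ i ∈ Finset.Icc 1 m,
                  (p:ℤ)^i * ∑ Y ∈ RZ V, (gfun (bc p i) (p^i) (p^(m-i)) Y)^p)
              = (∑ i ∈ Finset.Icc 1 m, (p:ℤ)^i * Phi (bc p i) (p^i) (p^(m-i)) V)
              - (∑ i ∈ Finset.Icc 1 m,
                  (p:ℤ)^i * ∑ Y ∈ RZ V, (gfun (bc p i) (p^i) (p^(m-i)) Y)^p) := by ring
          rw [hre, key]
        rw [hNum]
        apply Finset.dvd_sum
        intro i hi
        obtain ⟨hi1, hi2⟩ := Finset.mem_Icc.mp hi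
        have hk := key_dvd hp (bc p i) hVlenm hi1 hi2
        have he : (p:ℤ)^n = (p:ℤ)^i * (p:ℤ)^(m+1-i) := by
          rw [← pow_add]
          congr 1
          omega
        rw [he]
        exact mul_dvd_mul_left _ hk
    · -- case B : full period p^n
      have hd := minPer_dvd_length hWpos
      obtain ⟨j, hjn, hdj⟩ := (Nat.dvd_prime_pow hp).mp (hW ▸ hd)
      have hjeq : j = n := by
        by_contra hc
        have hj1 : j ≤ n - 1 := by omega
        apply hrot
        have h1 : p^(n-1) = minPer W * (p^(n-1) / minPer W) := by
          rw [Nat.mul_div_cancel' ]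
          rw [hdj]
          exact pow_dvd_pow p hj1
        rw [h1]
        exact rotate_minPer_mul hWpos _
      have hcard : ((RZ W).card : ℤ) = (p:ℤ)^n := by
        rw [card_RZ hWpos, hdj, hjeq]
        push_cast
        ring
      have hpure : pureInd W = 0 := by
        unfold pureInd
        have hnot : ∀ a : Fin 2, ¬ (List.replicate W.length a ∈ RZ W) := by
          intro a hmem
          apply hrot
          have h1 := replicate_mem_RZ_iff.mp hmem
          rw [h1, List.rotate_replicate]
        rw [if_neg (hnot 0), if_neg (hnot 1)]
        ring
      unfold Num NumF
      rw [hcard, hpure, sub_zero]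
      apply dvd_sub
      · exact Dvd.intro 1 (by ring)
      · apply Finset.dvd_sum
        intro i hi
        obtain ⟨hi1, hi2⟩ := Finset.mem_Icc.mp hi
        have hi2' : i ≤ n := by omega
        set β := bc p i
        have hgper : ∀ r, gfun β (p^i) (p^(n-i)) (W.rotate (r + p^i))
            = gfun β (p^i) (p^(n-i)) (W.rotate r) := by
          intro r
          have h1 : W.rotate (r + p^i) = (W.rotate r).rotate (p^i) :=
            (List.rotate_rotate W r (p^i)).symm
          have h2 : (W.rotate r).length = p^(n-i) * p^i := by
            rw [List.length_rotate, hW, ← pow_add]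
            congr 1
            omega
          rw [h1, gfun_rotate_blk h2 (pow_pos hppos i)]
        have hsum : Phi β (p^i) (p^(n-i)) W
            = ∑ r ∈ Finset.range (minPer W), gfun β (p^i) (p^(n-i)) (W.rotate r) := by
          unfold Phi
          rw [RZ_eq_image_minPer hWpos, Finset.sum_image]
          intro x hx y hy hxy
          exact rotate_injOn_minPer hWpos (Finset.mem_range.mp hx) (Finset.mem_range.mp hy) hxy
        have hdn : minPer W = p^i * p^(n-i) := by
          rw [hdj, hjeq, ← pow_add]
          congr 1
          omega
        rw [hsum, hdn, sum_range_mul_periodic _ (p^i) (p^(n-i)) hgper]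
        set S := ∑ r ∈ Finset.range (p^i), gfun β (p^i) (p^(n-i)) (W.rotate r)
        have : (p:ℤ)^i * ((p^(n-i) : ℕ) * S) = (p:ℤ)^n * S := by
          push_cast
          rw [← mul_assoc, ← pow_add]
          congr 2
          omega
        rw [this]
        exact Dvd.intro S rfl

end DIVsec
/-! ### coefficient calculus in the monoid algebra -/

section Coeff

abbrev R2 : Type := MonoidAlgebra ℤ (FreeMonoid (Fin 2))

instance : CoeFun R2 (fun _ => FreeMonoid (Fin 2) → ℤ) := ⟨fun x => x.coeff⟩

abbrev R2.support (x : R2) : Finset (FreeMonoid (Fin 2)) := x.coeff.support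

/-- homogeneity of degree `L` -/
def Hom (L : ℕ) (x : R2) : Prop :=
  ∀ v : FreeMonoid (Fin 2), x v ≠ 0 → (FreeMonoid.toList v).length = L

lemma hom_add {L : ℕ} {x y : R2} (hx : Hom L x) (hy : Hom L y) : Hom L (x + y) := by
  intro v hv
  rcases ne_or_eq (x v) 0 with h | h
  · exact hx v h
  · apply hy v
    intro h2
    apply hv
    show x v + y v = 0
    rw [h, h2, add_zero]

lemma hom_single {w : Word} {c : ℤ} :
    Hom w.length (MonoidAlgebra.single (FreeMonoid.ofList w) c) := by
  intro v hv
  by_cases h2 : FreeMonoid.ofList w = v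
  · rw [← h2, FreeMonoid.toList_ofList]
  · exact absurd (by rw [MonoidAlgebra.coeff_single]; exact Finsupp.single_eq_of_ne' h2) hv

lemma mul_apply_homog {x y : R2} {Lx Ly : ℕ} (hx : Hom Lx x) (hy : Hom Ly y)
    (w : FreeMonoid (Fin 2)) :
    (x*y) w = if (FreeMonoid.toList w).length = Lx + Ly
      then x (FreeMonoid.ofList ((FreeMonoid.toList w).take Lx))
        * y (FreeMonoid.ofList ((FreeMonoid.toList w).drop Lx)) else 0 := by
  classical
  rw [MonoidAlgebra.mul_apply]
  simp only [Finsupp.sum]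
  have hkey : ∀ a₁ a₂ : FreeMonoid (Fin 2), a₁ ∈ x.support → a₂ ∈ y.support →
      a₁ * a₂ = w → (FreeMonoid.toList w).length = Lx + Ly
        ∧ a₁ = FreeMonoid.ofList ((FreeMonoid.toList w).take Lx)
        ∧ a₂ = FreeMonoid.ofList ((FreeMonoid.toList w).drop Lx) := by
    intro a₁ a₂ h1 h2 hmul
    have hl1 : (FreeMonoid.toList a₁).length = Lx := hx a₁ (Finsupp.mem_support_iff.mp h1)
    have hl2 : (FreeMonoid.toList a₂).length = Ly := hy a₂ (Finsupp.mem_support_iff.mp h2)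
    have happ : FreeMonoid.toList w = FreeMonoid.toList a₁ ++ FreeMonoid.toList a₂ := by
      rw [← hmul, FreeMonoid.toList_mul]
    refine ⟨by rw [happ, List.length_append, hl1, hl2], ?_, ?_⟩
    · rw [happ, ← hl1, List.take_left, FreeMonoid.ofList_toList]
    · rw [happ, ← hl1, List.drop_left, FreeMonoid.ofList_toList]
  by_cases hlen : (FreeMonoid.toList w).length = Lx + Ly
  · rw [if_pos hlen]
    set t := FreeMonoid.ofList ((FreeMonoid.toList w).take Lx) with ht
    set d := FreeMonoid.ofList ((FreeMonoid.toList w).drop Lx) with hd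
    have htd : t * d = w := by
      rw [ht, hd, ← FreeMonoid.ofList_append, List.take_append_drop, FreeMonoid.ofList_toList]
    have hterm : ∀ a₁ ∈ x.support,
        (∑ a₂ ∈ y.support, if a₁ * a₂ = w then x a₁ * y a₂ else 0)
        = if a₁ = t then (if d ∈ y.support then x a₁ * y d else 0) else 0 := by
      intro a₁ h1
      by_cases he1 : a₁ = t
      · rw [if_pos he1]
        have hin : ∀ a₂ ∈ y.support, (if a₁ * a₂ = w then x a₁ * y a₂ else 0)
            = (if a₂ = d then x a₁ * y a₂ else 0) := by
          intro a₂ h2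
          by_cases he2 : a₂ = d
          · rw [if_pos he2, if_pos (by rw [he1, he2]; exact htd)]
          · rw [if_neg he2, if_neg]
            intro hmul
            exact he2 (hkey a₁ a₂ h1 h2 hmul).2.2
        rw [Finset.sum_congr rfl hin,
          Finset.sum_ite_eq' y.support d (fun a₂ => x a₁ * y a₂), he1]
      · rw [if_neg he1]
        apply Finset.sum_eq_zero
        intro a₂ h2
        rw [if_neg]
        intro hmul
        exact he1 (hkey a₁ a₂ h1 h2 hmul).2.1
    rw [Finset.sum_congr rfl hterm,
      Finset.sum_ite_eq' x.support t (fun a₁ => if d ∈ y.support then x a₁ * y d else 0)]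
    by_cases hts : t ∈ x.support
    · rw [if_pos hts]
      by_cases hds : d ∈ y.support
      · rw [if_pos hds]
      · rw [if_neg hds, Finsupp.notMem_support_iff.mp hds, mul_zero]
    · rw [if_neg hts, Finsupp.notMem_support_iff.mp hts, zero_mul]
  · rw [if_neg hlen]
    apply Finset.sum_eq_zero
    intro a₁ h1
    apply Finset.sum_eq_zero
    intro a₂ h2
    rw [if_neg]
    intro hmul
    exact hlen (hkey a₁ a₂ h1 h2 hmul).1

lemma hom_mul {x y : R2} {Lx Ly : ℕ} (hx : Hom Lx x) (hy : Hom Ly y) :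
    Hom (Lx + Ly) (x * y) := by
  intro v hv
  rw [mul_apply_homog hx hy] at hv
  by_contra hc
  rw [if_neg hc] at hv
  exact hv rfl

lemma hom_one : Hom 0 (1 : R2) := by
  rw [MonoidAlgebra.one_def]
  have h := hom_single (w := ([] : Word)) (c := (1:ℤ))
  exact h

lemma hom_pow {x : R2} {L : ℕ} (hx : Hom L x) : ∀ m, Hom (m * L) (x^m) := by
  intro m
  induction m with
  | zero => rw [Nat.zero_mul, pow_zero]; exact hom_one
  | succ m ih =>
    have h := hom_mul hx ih
    have e : (m+1)*L = L + m*L := by ring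
    rw [pow_succ', e]
    exact h

lemma pow_apply_blk {x : R2} {L : ℕ} (hx : Hom L x) :
    ∀ (m : ℕ) (w : FreeMonoid (Fin 2)), (FreeMonoid.toList w).length = m * L →
      (x^m) w = ∏ t ∈ Finset.range m, x (FreeMonoid.ofList (blk L t (FreeMonoid.toList w))) := by
  intro m
  induction m with
  | zero =>
    intro w hw
    rw [Nat.zero_mul] at hw
    have hwnil : FreeMonoid.toList w = [] := List.length_eq_zero_iff.mp hw
    have hw1 : w = 1 := by
      have h2 := congrArg FreeMonoid.ofList hwnil
      rw [FreeMonoid.ofList_toList] at h2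
      exact h2
    rw [hw1, pow_zero, Finset.range_zero, Finset.prod_empty, MonoidAlgebra.one_def]
    exact Finsupp.single_eq_same
  | succ m ih =>
    intro w hw
    have hlen : (FreeMonoid.toList w).length = L + m * L := by rw [hw]; ring
    rw [pow_succ', mul_apply_homog hx (hom_pow hx m) w, if_pos hlen]
    have hdlen : (FreeMonoid.toList (FreeMonoid.ofList
        ((FreeMonoid.toList w).drop L))).length = m * L := by
      rw [FreeMonoid.toList_ofList, List.length_drop, hlen]
      omega
    rw [ih _ hdlen]
    have hblkt : ∀ t, blk L t (FreeMonoid.toList (FreeMonoid.ofList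
        ((FreeMonoid.toList w).drop L))) = blk L (t+1) (FreeMonoid.toList w) := by
      intro t
      rw [FreeMonoid.toList_ofList]
      unfold blk
      rw [List.drop_drop]
      congr 2
      ring
    rw [Finset.prod_congr rfl
      (fun t _ => congrArg x (congrArg FreeMonoid.ofList (hblkt t)))]
    rw [Finset.prod_range_succ']
    have hblk0 : blk L 0 (FreeMonoid.toList w) = (FreeMonoid.toList w).take L := by
      unfold blk
      rw [Nat.zero_mul, List.drop_zero]
    rw [hblk0]
    ring

end Coeff
/-! ### the commutator criterion -/

section Crit

def commSet (A : Type*) [Ring A] : Set A := {z | ∃ a b : A, z = a*b - b*a}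

noncomputable def phiW (W : Word) (x : R2) : ℤ := ∑ V ∈ RZ W, x (FreeMonoid.ofList V)

lemma ofList_inj : Function.Injective (FreeMonoid.ofList (α := Fin 2)) := by
  intro a b h
  have h2 := congrArg FreeMonoid.toList h
  rwa [FreeMonoid.toList_ofList, FreeMonoid.toList_ofList] at h2

theorem mem_commClosure_of_phiW_eq_zero {x : R2} (h : ∀ W : Word, phiW W x = 0) :
    x ∈ AddSubgroup.closure (commSet R2) := by
  classical
  have hrot : ∀ (w : Word) (k : ℕ), k ≤ w.length → ∀ c : ℤ,
      MonoidAlgebra.single (FreeMonoid.ofList w) c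
        - MonoidAlgebra.single (FreeMonoid.ofList (w.rotate k)) c
        ∈ AddSubgroup.closure (commSet R2) := by
    intro w k hk c
    apply AddSubgroup.subset_closure
    refine ⟨MonoidAlgebra.single (FreeMonoid.ofList (w.take k)) c,
      MonoidAlgebra.single (FreeMonoid.ofList (w.drop k)) 1, ?_⟩
    rw [MonoidAlgebra.single_mul_single, MonoidAlgebra.single_mul_single,
      mul_one, one_mul, ← FreeMonoid.ofList_append, ← FreeMonoid.ofList_append,
      List.take_append_drop, ← List.rotate_eq_drop_append_take hk]
  have hsingle_rep : ∀ (v : FreeMonoid (Fin 2)) (c : ℤ),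
      MonoidAlgebra.single v c
        - MonoidAlgebra.single (FreeMonoid.ofList (minrep (FreeMonoid.toList v))) c
        ∈ AddSubgroup.closure (commSet R2) := by
    intro v c
    obtain ⟨k, hk, hkeq⟩ := mem_RZ_image.mp (minrep_mem (FreeMonoid.toList v))
    have hk' : k ≤ (FreeMonoid.toList v).length := by
      have := Finset.mem_range.mp hk
      omega
    have h2 := hrot (FreeMonoid.toList v) k hk' c
    rw [hkeq, FreeMonoid.ofList_toList] at h2
    exact h2
  set μ : FreeMonoid (Fin 2) → FreeMonoid (Fin 2) :=
    fun v => FreeMonoid.ofList (minrep (FreeMonoid.toList v)) with hμ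
  have hxdecomp : x = ∑ v ∈ x.support, MonoidAlgebra.single v (x v) := by
    conv_lhs => rw [← MonoidAlgebra.sum_coeff_single x]
    rfl
  set y := ∑ v ∈ x.support, MonoidAlgebra.single (μ v) (x v) with hy
  have hxy : x - y ∈ AddSubgroup.closure (commSet R2) := by
    have hdiff : x - y = ∑ v ∈ x.support,
        (MonoidAlgebra.single v (x v) - MonoidAlgebra.single (μ v) (x v)) := by
      rw [Finset.sum_sub_distrib, ← hxdecomp]
    rw [hdiff]
    exact AddSubgroup.sum_mem _ (fun v _ => hsingle_rep v (x v))
  have hyzero : y = 0 := by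
    have hmapsto : ∀ v ∈ x.support, μ v ∈ x.support.image μ :=
      fun v hv => Finset.mem_image_of_mem _ hv
    have hfib := Finset.sum_fiberwise_of_maps_to hmapsto
      (fun v => MonoidAlgebra.single (μ v) (x v))
    rw [hy, ← hfib]
    apply Finset.sum_eq_zero
    intro r hr
    obtain ⟨v₀, hv₀, hv₀r⟩ := Finset.mem_image.mp hr
    set W₀ := FreeMonoid.toList r with hW₀
    have hrminrep : minrep W₀ = W₀ := by
      rw [hW₀, ← hv₀r, hμ]
      simp only [FreeMonoid.toList_ofList]
      exact minrep_of_mem (minrep_mem _)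
    have hrofW₀ : FreeMonoid.ofList W₀ = r := by
      rw [hW₀, FreeMonoid.ofList_toList]
    have hinner : ∀ v ∈ x.support.filter (fun v => μ v = r),
        MonoidAlgebra.single (μ v) (x v) = MonoidAlgebra.single r (x v) := by
      intro v hv
      rw [(Finset.mem_filter.mp hv).2]
    rw [Finset.sum_congr rfl hinner]
    have hsingle_sum : ∑ v ∈ x.support.filter (fun v => μ v = r),
        MonoidAlgebra.single r (x v)
        = MonoidAlgebra.single r (∑ v ∈ x.support.filter (fun v => μ v = r), x v) := by
      exact (map_sum (MonoidAlgebra.singleAddHom r) (fun v => x v)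
        (x.support.filter (fun v => μ v = r))).symm
    rw [hsingle_sum]
    -- the coefficient sum is phiW W₀ x
    have hsets : ∑ v ∈ x.support.filter (fun v => μ v = r), x v = phiW W₀ x := by
      have hS1 : phiW W₀ x = ∑ v ∈ (RZ W₀).image FreeMonoid.ofList, x v := by
        unfold phiW
        rw [Finset.sum_image (fun a _ b _ hab => ofList_inj hab)]
      rw [hS1]
      apply Finset.sum_subset
      · intro v hv
        obtain ⟨hvs, hvr⟩ := Finset.mem_filter.mp hv
        have h1 : minrep (FreeMonoid.toList v) = W₀ := by
          have := congrArg FreeMonoid.toList hvr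
          rwa [hμ, FreeMonoid.toList_ofList] at this
        have h2 : FreeMonoid.toList v ∈ RZ W₀ := by
          rw [← h1, RZ_of_mem (minrep_mem (FreeMonoid.toList v))]
          exact self_mem_RZ _
        have h3 : v = FreeMonoid.ofList (FreeMonoid.toList v) :=
          (FreeMonoid.ofList_toList v).symm
        rw [h3]
        exact Finset.mem_image_of_mem _ h2
      · intro v hv hnv
        by_contra hvne
        apply hnv
        obtain ⟨V, hV, rfl⟩ := Finset.mem_image.mp hv
        apply Finset.mem_filter.mpr
        refine ⟨Finsupp.mem_support_iff.mpr hvne, ?_⟩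
        rw [hμ]
        simp only [FreeMonoid.toList_ofList]
        rw [minrep_of_mem hV, hrminrep, hrofW₀]
    rw [hsets, h W₀]
    exact MonoidAlgebra.single_zero r
  rw [hyzero, sub_zero] at hxy
  exact hxy

lemma comm_closure_map {A B : Type*} [Ring A] [Ring B] (f : A →+* B) {x : A}
    (hx : x ∈ AddSubgroup.closure (commSet A)) :
    f x ∈ AddSubgroup.closure (commSet B) := by
  refine AddSubgroup.closure_induction ?_ ?_ ?_ ?_ hx
  · intro z hz
    obtain ⟨a, b, rfl⟩ := hz
    apply AddSubgroup.subset_closure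
    exact ⟨f a, f b, by rw [map_sub, map_mul, map_mul]⟩
  · rw [map_zero]
    exact AddSubgroup.zero_mem _
  · intro a b _ _ ha hb
    rw [map_add]
    exact AddSubgroup.add_mem _ ha hb
  · intro a _ ha
    rw [map_neg]
    exact AddSubgroup.neg_mem _ ha

end Crit
/-! ### assembly -/

section Assembly

abbrev FA : Type := FreeAlgebra ℤ (Fin 2)

noncomputable def eqv : FA ≃ₐ[ℤ] R2 := FreeAlgebra.equivMonoidAlgebraFreeMonoid

def wordProd (w : Word) : FA := (w.map (FreeAlgebra.ι ℤ)).prod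

lemma eqv_ι (a : Fin 2) :
    eqv (FreeAlgebra.ι ℤ a) = MonoidAlgebra.single (FreeMonoid.of a) 1 := by
  simp [eqv, FreeAlgebra.equivMonoidAlgebraFreeMonoid]

lemma eqv_wordProd (w : Word) :
    eqv (wordProd w) = MonoidAlgebra.single (FreeMonoid.ofList w) 1 := by
  induction w with
  | nil =>
    show eqv ((List.map (FreeAlgebra.ι ℤ) []).prod) = _
    rw [List.map_nil, List.prod_nil, map_one, FreeMonoid.ofList_nil, MonoidAlgebra.one_def]
  | cons a w ih =>
    show eqv ((List.map (FreeAlgebra.ι ℤ) (a :: w)).prod) = _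
    rw [List.map_cons, List.prod_cons, map_mul, eqv_ι]
    have ihw : eqv ((List.map (FreeAlgebra.ι ℤ) w).prod)
        = MonoidAlgebra.single (FreeMonoid.ofList w) 1 := ih
    rw [ihw, MonoidAlgebra.single_mul_single, one_mul]
    have h2 : FreeMonoid.of a * FreeMonoid.ofList w = FreeMonoid.ofList (a :: w) := by
      rw [← FreeMonoid.ofList_singleton, ← FreeMonoid.ofList_append]
      rfl
    rw [h2]

def WS (m : ℕ) : Finset Word := (Finset.univ : Finset (Fin m → Fin 2)).image (fun f => List.ofFn f)

lemma mem_WS {m : ℕ} {w : Word} : w ∈ WS m ↔ w.length = m := by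
  constructor
  · intro h
    obtain ⟨f, _, rfl⟩ := Finset.mem_image.mp h
    exact List.length_ofFn (f := f)
  · intro h
    subst h
    exact Finset.mem_image.mpr ⟨w.get, Finset.mem_univ _, List.ofFn_get w⟩

noncomputable def cF (p i : ℕ) : FA := ∑ w ∈ WS (p^i), bc p i w • wordProd w

lemma cF_mem_span (p i : ℕ) : cF p i ∈ Submodule.span ℤ
    {x : FA | ∃ w : Word, w.length = p ^ i ∧ x = (w.map (FreeAlgebra.ι ℤ)).prod} := by
  apply Submodule.sum_mem
  intro w hw
  apply Submodule.smul_mem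
  apply Submodule.subset_span
  exact ⟨w, mem_WS.mp hw, rfl⟩

lemma bc_len_ne {p i : ℕ} {w : Word} (h : w.length ≠ p^i) : bc p i w = 0 := by
  rw [bc_def]
  rw [if_neg]
  intro hc
  exact h hc.2.1

lemma coeff_cF (p i : ℕ) (v : FreeMonoid (Fin 2)) :
    (eqv (cF p i)) v = bc p i (FreeMonoid.toList v) := by
  classical
  unfold cF
  rw [map_sum]
  have h1 : ∀ w ∈ WS (p^i), eqv (bc p i w • wordProd w)
      = bc p i w • MonoidAlgebra.single (FreeMonoid.ofList w) 1 := by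
    intro w _
    rw [map_zsmul, eqv_wordProd]
  rw [Finset.sum_congr rfl h1, MonoidAlgebra.coeff_sum, Finsupp.finset_sum_apply]
  by_cases hv : (FreeMonoid.toList v).length = p^i
  · rw [Finset.sum_eq_single (FreeMonoid.toList v)]
    · rw [MonoidAlgebra.coeff_smul, Finsupp.smul_apply, MonoidAlgebra.coeff_single, FreeMonoid.ofList_toList, Finsupp.single_eq_same,
        smul_eq_mul, mul_one]
    · intro w _ hne
      rw [MonoidAlgebra.coeff_smul, Finsupp.smul_apply, MonoidAlgebra.coeff_single, Finsupp.single_eq_of_ne', smul_zero]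
      intro hc
      exact hne (by rw [← FreeMonoid.toList_ofList w, hc])
    · intro hns
      exact absurd (mem_WS.mpr hv) hns
  · rw [Finset.sum_eq_zero, (bc_len_ne hv).symm]
    intro w hw
    rw [MonoidAlgebra.coeff_smul, Finsupp.smul_apply, MonoidAlgebra.coeff_single, Finsupp.single_eq_of_ne', smul_zero]
    intro hc
    apply hv
    rw [← hc, FreeMonoid.toList_ofList]
    exact mem_WS.mp hw

lemma hom_cF (p i : ℕ) : Hom (p^i) (eqv (cF p i)) := by
  intro v hv
  rw [coeff_cF] at hv
  by_contra hc
  exact hv (bc_len_ne hc)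

/-! phiW linearity -/

lemma phiW_sub (W : Word) (x y : R2) : phiW W (x - y) = phiW W x - phiW W y := by
  unfold phiW
  rw [← Finset.sum_sub_distrib]
  apply Finset.sum_congr rfl
  intro V _
  rw [MonoidAlgebra.coeff_sub, Finsupp.sub_apply]

lemma phiW_smul (W : Word) (k : ℤ) (x : R2) : phiW W (k • x) = k * phiW W x := by
  unfold phiW
  rw [Finset.mul_sum]
  apply Finset.sum_congr rfl
  intro V _
  rw [MonoidAlgebra.coeff_smul, Finsupp.smul_apply, smul_eq_mul]

lemma phiW_finset_sum (W : Word) {ι : Type} (s : Finset ι) (f : ι → R2) :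
    phiW W (∑ i ∈ s, f i) = ∑ i ∈ s, phiW W (f i) := by
  unfold phiW
  rw [Finset.sum_comm]
  apply Finset.sum_congr rfl
  intro V _
  rw [MonoidAlgebra.coeff_sum, Finsupp.finset_sum_apply]

lemma phiW_eq_zero_of_hom {L : ℕ} {W : Word} {x : R2} (hx : Hom L x)
    (hW : W.length ≠ L) : phiW W x = 0 := by
  unfold phiW
  apply Finset.sum_eq_zero
  intro V hV
  by_contra hc
  apply hW
  rw [← length_of_mem_RZ hV]
  have := hx (FreeMonoid.ofList V) hc
  rwa [FreeMonoid.toList_ofList] at this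

/-! computations of phiW on the four pieces -/

lemma blk_len_one {V : Word} {t : ℕ} (ht : t < V.length) : (blk 1 t V).length = 1 := by
  unfold blk
  rw [List.length_take, List.length_drop]
  omega

lemma hom_gen_sum : Hom 1 (eqv (FreeAlgebra.ι ℤ (0 : Fin 2) + FreeAlgebra.ι ℤ (1 : Fin 2))) := by
  rw [map_add, eqv_ι, eqv_ι, ← FreeMonoid.ofList_singleton, ← FreeMonoid.ofList_singleton]
  exact hom_add (hom_single (w := [(0:Fin 2)])) (hom_single (w := [(1:Fin 2)]))

lemma coeff_gen_sum {v : FreeMonoid (Fin 2)} (hv : (FreeMonoid.toList v).length = 1) :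
    (eqv (FreeAlgebra.ι ℤ (0 : Fin 2) + FreeAlgebra.ι ℤ (1 : Fin 2))) v = 1 := by
  classical
  obtain ⟨a, ha⟩ := List.length_eq_one_iff.mp hv
  have hva : v = FreeMonoid.ofList [a] := by
    rw [← ha, FreeMonoid.ofList_toList]
  rw [map_add, eqv_ι, eqv_ι, MonoidAlgebra.coeff_add, Finsupp.add_apply, MonoidAlgebra.coeff_single,
    MonoidAlgebra.coeff_single, hva,
    ← FreeMonoid.ofList_singleton, ← FreeMonoid.ofList_singleton]
  have hne : FreeMonoid.ofList [(0:Fin 2)] ≠ FreeMonoid.ofList [(1:Fin 2)] := by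
    intro hc
    have h3 := congrArg FreeMonoid.toList hc
    rw [FreeMonoid.toList_ofList, FreeMonoid.toList_ofList] at h3
    exact absurd h3 (by decide)
  by_cases h0 : a = 0
  · subst h0
    rw [Finsupp.single_eq_same, Finsupp.single_eq_of_ne' (Ne.symm hne)]
    ring
  · have h1 : a = 1 := by
      have hlt := a.isLt
      have hnz : (a : ℕ) ≠ 0 := fun hc => h0 (Fin.ext hc)
      exact Fin.ext (by omega)
    subst h1
    rw [Finsupp.single_eq_of_ne' hne, Finsupp.single_eq_same]
    ring

lemma phiW_gen_pow {p n : ℕ} (hp : p.Prime) {W : Word} (hW : W.length = p^n) :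
    phiW W (eqv ((FreeAlgebra.ι ℤ (0 : Fin 2) + FreeAlgebra.ι ℤ (1 : Fin 2))^(p^n)))
      = ((RZ W).card : ℤ) := by
  unfold phiW
  rw [map_pow]
  have hterm : ∀ V ∈ RZ W,
      ((eqv (FreeAlgebra.ι ℤ (0:Fin 2) + FreeAlgebra.ι ℤ (1:Fin 2)))^(p^n))
        (FreeMonoid.ofList V) = 1 := by
    intro V hV
    have hVlen : V.length = p^n := by rw [length_of_mem_RZ hV, hW]
    rw [pow_apply_blk hom_gen_sum (p^n) (FreeMonoid.ofList V)
      (by rw [FreeMonoid.toList_ofList, hVlen, Nat.mul_one])]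
    apply Finset.prod_eq_one
    intro t ht
    apply coeff_gen_sum
    rw [FreeMonoid.toList_ofList, FreeMonoid.toList_ofList]
    apply blk_len_one
    rw [hVlen]
    exact Finset.mem_range.mp ht
  rw [Finset.sum_congr rfl hterm, Finset.sum_const, nsmul_eq_mul, mul_one]

lemma of_pow_toList (a : Fin 2) (m : ℕ) :
    (FreeMonoid.of a)^m = FreeMonoid.ofList (List.replicate m a) := by
  induction m with
  | zero => rw [pow_zero, List.replicate_zero, FreeMonoid.ofList_nil]
  | succ m ih =>
    rw [pow_succ', ih, List.replicate_succ, ← FreeMonoid.ofList_singleton,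
      ← FreeMonoid.ofList_append]
    rfl

lemma phiW_single_one (W : Word) (u : FreeMonoid (Fin 2)) :
    phiW W (MonoidAlgebra.single u 1)
      = if FreeMonoid.toList u ∈ RZ W then (1:ℤ) else 0 := by
  classical
  unfold phiW
  have hterm : ∀ V ∈ RZ W, (MonoidAlgebra.single u (1:ℤ)) (FreeMonoid.ofList V)
      = if V = FreeMonoid.toList u then (1:ℤ) else 0 := by
    intro V _
    by_cases hc : V = FreeMonoid.toList u
    · rw [if_pos hc, hc, FreeMonoid.ofList_toList, MonoidAlgebra.coeff_single,
      Finsupp.single_eq_same]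
    · rw [if_neg hc, MonoidAlgebra.coeff_single, Finsupp.single_eq_of_ne']
      intro h2
      apply hc
      rw [h2, FreeMonoid.toList_ofList]
  rw [Finset.sum_congr rfl hterm, Finset.sum_ite_eq' (RZ W) (FreeMonoid.toList u)
    (fun _ => (1:ℤ))]

lemma phiW_pure_pow {p n : ℕ} {W : Word} (hW : W.length = p^n) (a : Fin 2) :
    phiW W (eqv ((FreeAlgebra.ι ℤ a)^(p^n)))
      = if List.replicate W.length a ∈ RZ W then (1:ℤ) else 0 := by
  rw [map_pow, eqv_ι, MonoidAlgebra.single_pow, one_pow, of_pow_toList,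
    phiW_single_one, FreeMonoid.toList_ofList, hW]

lemma phiW_cF_pow {p n i : ℕ} (hp : p.Prime) {W : Word} (hW : W.length = p^n)
    (hi : i ≤ n) :
    phiW W (eqv ((cF p i)^(p^(n-i)))) = Phi (bc p i) (p^i) (p^(n-i)) W := by
  unfold phiW Phi
  rw [map_pow]
  apply Finset.sum_congr rfl
  intro V hV
  have hVlen : V.length = p^(n-i) * p^i := by
    rw [length_of_mem_RZ hV, hW, ← pow_add]
    congr 1
    omega
  rw [pow_apply_blk (hom_cF p i) (p^(n-i)) (FreeMonoid.ofList V)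
    (by rw [FreeMonoid.toList_ofList, hVlen])]
  unfold gfun
  apply Finset.prod_congr rfl
  intro t _
  rw [coeff_cF, FreeMonoid.toList_ofList, FreeMonoid.toList_ofList]

theorem TF_mem {p : ℕ} (hp : p.Prime) (n : ℕ) (hn : 1 ≤ n) :
    ((FreeAlgebra.ι ℤ (0:Fin 2) + FreeAlgebra.ι ℤ (1:Fin 2))^(p^n)
      - (FreeAlgebra.ι ℤ (0:Fin 2))^(p^n) - (FreeAlgebra.ι ℤ (1:Fin 2))^(p^n)
      - ∑ i ∈ Finset.Icc 1 n, ((p:ℤ)^i) • (cF p i)^(p^(n-i)))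
      ∈ AddSubgroup.closure (commSet FA) := by
  classical
  set TF : FA := (FreeAlgebra.ι ℤ (0:Fin 2) + FreeAlgebra.ι ℤ (1:Fin 2))^(p^n)
      - (FreeAlgebra.ι ℤ (0:Fin 2))^(p^n) - (FreeAlgebra.ι ℤ (1:Fin 2))^(p^n)
      - ∑ i ∈ Finset.Icc 1 n, ((p:ℤ)^i) • (cF p i)^(p^(n-i)) with hTF
  have hsplit : ∀ W : Word, phiW W (eqv TF)
      = phiW W (eqv ((FreeAlgebra.ι ℤ (0:Fin 2) + FreeAlgebra.ι ℤ (1:Fin 2))^(p^n)))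
        - phiW W (eqv ((FreeAlgebra.ι ℤ (0:Fin 2))^(p^n)))
        - phiW W (eqv ((FreeAlgebra.ι ℤ (1:Fin 2))^(p^n)))
        - ∑ i ∈ Finset.Icc 1 n, (p:ℤ)^i * phiW W (eqv ((cF p i)^(p^(n-i)))) := by
    intro W
    rw [hTF, map_sub, map_sub, map_sub, map_sum, phiW_sub, phiW_sub, phiW_sub,
      phiW_finset_sum]
    congr 1
    apply Finset.sum_congr rfl
    intro i _
    rw [map_zsmul, phiW_smul]
  have hphi : ∀ W : Word, phiW W (eqv TF) = 0 := by
    intro W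
    rw [hsplit W]
    by_cases hW : W.length = p^n
    · rw [phiW_gen_pow hp hW, phiW_pure_pow hW 0, phiW_pure_pow hW 1]
      have hEQ := EQ_of_DIV hp hn (DIV hp n hn) W hW
      have hsc : ∀ i ∈ Finset.Icc 1 n,
          (p:ℤ)^i * phiW W (eqv ((cF p i)^(p^(n-i))))
            = (p:ℤ)^i * Phi (bc p i) (p^i) (p^(n-i)) W := by
        intro i hi
        rw [phiW_cF_pow hp hW (Finset.mem_Icc.mp hi).2]
      rw [Finset.sum_congr rfl hsc]
      rw [hEQ]
      unfold pureInd
      ring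
    · have h1 : phiW W (eqv ((FreeAlgebra.ι ℤ (0:Fin 2)
          + FreeAlgebra.ι ℤ (1:Fin 2))^(p^n))) = 0 := by
        apply phiW_eq_zero_of_hom (L := p^n * 1) (by rw [map_pow]; exact hom_pow hom_gen_sum (p^n))
        omega
      have h2 : ∀ a : Fin 2, phiW W (eqv ((FreeAlgebra.ι ℤ a)^(p^n))) = 0 := by
        intro a
        apply phiW_eq_zero_of_hom (L := p^n * 1)
        · rw [map_pow, eqv_ι, ← FreeMonoid.ofList_singleton]
          exact hom_pow (hom_single (w := [a])) (p^n)
        · omega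
      have h3 : ∀ i ∈ Finset.Icc 1 n,
          (p:ℤ)^i * phiW W (eqv ((cF p i)^(p^(n-i)))) = 0 := by
        intro i hi
        have hhom : Hom (p^(n-i) * p^i) (eqv ((cF p i)^(p^(n-i)))) := by
          rw [map_pow]
          exact hom_pow (hom_cF p i) (p^(n-i))
        have hlen : W.length ≠ p^(n-i) * p^i := by
          rw [← pow_add]
          have he : n - i + i = n := by
            have := (Finset.mem_Icc.mp hi).2
            omega
          rw [he]
          exact hW
        rw [phiW_eq_zero_of_hom hhom hlen, mul_zero]
      rw [h1, h2 0, h2 1, Finset.sum_congr rfl h3, Finset.sum_const, smul_zero]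
      ring
  have hR : eqv TF ∈ AddSubgroup.closure (commSet R2) :=
    mem_commClosure_of_phiW_eq_zero hphi
  have hF := comm_closure_map (eqv.symm : R2 ≃ₐ[ℤ] FA).toAlgHom.toRingHom hR
  have hback : eqv.symm (eqv TF) = TF := AlgEquiv.symm_apply_apply eqv TF
  rw [show ((eqv.symm : R2 ≃ₐ[ℤ] FA).toAlgHom.toRingHom) (eqv TF) = eqv.symm (eqv TF) from rfl,
    hback] at hF
  exact hF

end Assembly

end CILE

/-- Lemma `c.i.le`: there are universal noncommutative polynomials `c i` in
`ℤ⟨s₀, s₁⟩`, homogeneous of degree `p ^ i`, such that in every associative unital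
ring `A`, for all `a₀ a₁ : A` and `n ≥ 1`,
`(a₀ + a₁)^{p^n} - a₀^{p^n} - a₁^{p^n} ≡ Σ_{i=1}^n p^i · c_i(a₀,a₁)^{p^{n-i}}`
modulo the additive subgroup `[A, A]` generated by commutators. -/
theorem stmt_8 (p : ℕ) (hp : p.Prime) :
    ∃ c : ℕ → FreeAlgebra ℤ (Fin 2),
      (∀ i : ℕ, 1 ≤ i → c i ∈ Submodule.span ℤ
        {x : FreeAlgebra ℤ (Fin 2) | ∃ w : List (Fin 2),
          w.length = p ^ i ∧ x = (w.map (FreeAlgebra.ι ℤ)).prod}) ∧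
      ∀ (A : Type) [Ring A], ∀ a₀ a₁ : A, ∀ n : ℕ, 1 ≤ n →
        (a₀ + a₁) ^ p ^ n - a₀ ^ p ^ n - a₁ ^ p ^ n
            - ∑ i ∈ Finset.Icc 1 n,
                ((p : ℤ) ^ i) • ((FreeAlgebra.lift ℤ ![a₀, a₁]) (c i)) ^ p ^ (n - i)
          ∈ AddSubgroup.closure {x : A | ∃ a b : A, x = a * b - b * a} := by
  classical
  refine ⟨fun i => CILE.cF p i, ?_, ?_⟩
  · intro i _
    exact CILE.cF_mem_span p i
  · intro A _ a₀ a₁ n hn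
    set ψ : FreeAlgebra ℤ (Fin 2) →ₐ[ℤ] A := FreeAlgebra.lift ℤ ![a₀, a₁] with hψ
    have h0 : ψ (FreeAlgebra.ι ℤ (0:Fin 2)) = a₀ := by
      rw [hψ, FreeAlgebra.lift_ι_apply]
      exact Matrix.cons_val_zero a₀ ![a₁]
    have h1 : ψ (FreeAlgebra.ι ℤ (1:Fin 2)) = a₁ := by
      rw [hψ, FreeAlgebra.lift_ι_apply]
      rw [Matrix.cons_val_one, Matrix.cons_val_zero]
    have hTF := CILE.TF_mem hp n hn
    have himg := CILE.comm_closure_map ψ.toRingHom hTF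
    have heq : ψ.toRingHom
        ((FreeAlgebra.ι ℤ (0:Fin 2) + FreeAlgebra.ι ℤ (1:Fin 2))^(p^n)
          - (FreeAlgebra.ι ℤ (0:Fin 2))^(p^n) - (FreeAlgebra.ι ℤ (1:Fin 2))^(p^n)
          - ∑ i ∈ Finset.Icc 1 n, ((p:ℤ)^i) • (CILE.cF p i)^(p^(n-i)))
        = (a₀ + a₁) ^ p ^ n - a₀ ^ p ^ n - a₁ ^ p ^ n
            - ∑ i ∈ Finset.Icc 1 n,
                ((p : ℤ) ^ i) • ((FreeAlgebra.lift ℤ ![a₀, a₁]) (CILE.cF p i)) ^ p ^ (n - i) := by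
      rw [map_sub, map_sub, map_sub, map_pow, map_pow, map_pow, map_add, map_sum]
      have hc0 : ψ.toRingHom (FreeAlgebra.ι ℤ (0:Fin 2)) = a₀ := h0
      have hc1 : ψ.toRingHom (FreeAlgebra.ι ℤ (1:Fin 2)) = a₁ := h1
      rw [hc0, hc1]
      congr 1
      apply Finset.sum_congr rfl
      intro i _
      rw [map_zsmul, map_pow]
      rfl
    rw [heq] at himg
    exact himg
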